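/- Let W:Ω²→[0,1] be a graphon with Ω = A₀ ⊔ A_{1/2} ⊔ A₁ such that the function equal to 0 on A₀, 1/2 on A_{1/2}, and 1 on A₁ is a fractional vertex cover of W of size τ. Writing α_{1/2} = ν(A_{1/2}) and α₁ = ν(A₁), the edge density satisfies ∫∫W ≤ α_{1/2}² + 2α₁ − α₁² ≤ max{4τ², 2τ − τ²}. -/

import Mathlib

open scoped Classical

open MeasureTheory Set

def IsGraphon {Ω : Type*} [MeasurableSpace Ω] (W : Ω → Ω → ℝ) : Prop :=
  Measurable (Function.uncurry W) ∧ (∀ x y, W x y = W y x) ∧ ∀ x y, W x y ∈ Set.Icc (0:ℝ) 1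

def IsFracCover {Ω : Type*} [MeasurableSpace Ω] (ν : Measure Ω) (W : Ω → Ω → ℝ)
    (c : Ω → ℝ) : Prop :=
  Measurable c ∧ (∀ x, c x ∈ Set.Icc (0:ℝ) 1) ∧
    ∀ᵐ p ∂(ν.prod ν), 0 < W p.1 p.2 → 1 ≤ c p.1 + c p.2

theorem stmt_10 {Ω : Type*} [MeasurableSpace Ω] (ν : Measure Ω) [IsProbabilityMeasure ν]
    (W : Ω → Ω → ℝ) (hW : IsGraphon W)
    (A₀ Ah A₁ : Set Ω) (h₀ : MeasurableSet A₀) (hh : MeasurableSet Ah) (h₁ : MeasurableSet A₁)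
    (hdisj : Disjoint A₀ Ah ∧ Disjoint A₀ A₁ ∧ Disjoint Ah A₁)
    (hcover : A₀ ∪ Ah ∪ A₁ = Set.univ)
    (hc : IsFracCover ν W fun x => if x ∈ A₁ then (1:ℝ) else if x ∈ Ah then 1/2 else 0)
    (τ : ℝ) (hτ : τ = (ν Ah).toReal / 2 + (ν A₁).toReal) :
    (∫ p, W p.1 p.2 ∂(ν.prod ν)) ≤
        (ν Ah).toReal ^ 2 + 2 * (ν A₁).toReal - (ν A₁).toReal ^ 2 ∧
      (ν Ah).toReal ^ 2 + 2 * (ν A₁).toReal - (ν A₁).toReal ^ 2 ≤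
        max (4 * τ ^ 2) (2 * τ - τ ^ 2) := by
  obtain ⟨hWm, hWsymm, hWb⟩ := hW
  obtain ⟨hd0h, hd01, hdh1⟩ := hdisj
  set a := (ν Ah).toReal with ha
  set b := (ν A₁).toReal with hb
  set d := (ν A₀).toReal with hd
  have ha0 : 0 ≤ a := ENNReal.toReal_nonneg
  have hb0 : 0 ≤ b := ENNReal.toReal_nonneg
  have hd0 : 0 ≤ d := ENNReal.toReal_nonneg
  -- total measure equals 1
  have hsum : d + a + b = 1 := by
    have h1 : ν (A₀ ∪ Ah ∪ A₁) = 1 := by rw [hcover]; exact measure_univ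
    rw [measure_union (hd01.union_left hdh1) h₁, measure_union hd0h hh] at h1
    have := congrArg ENNReal.toReal h1
    rw [ENNReal.toReal_add (by finiteness) (by finiteness),
      ENNReal.toReal_add (by finiteness) (by finiteness)] at this
    simpa using this
  constructor
  · -- analytic part
    set μ := ν.prod ν with hμ
    set G : Set (Ω × Ω) := A₁ ×ˢ (univ : Set Ω) ∪ (A₀ ∪ Ah) ×ˢ A₁ ∪ Ah ×ˢ Ah with hG
    have hGm : MeasurableSet G :=
      ((h₁.prod MeasurableSet.univ).union ((h₀.union hh).prod h₁)).union (hh.prod hh)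
    have hclt : ∀ p : Ω × Ω, p ∉ G →
        (if p.1 ∈ A₁ then (1:ℝ) else if p.1 ∈ Ah then 1/2 else 0) +
        (if p.2 ∈ A₁ then (1:ℝ) else if p.2 ∈ Ah then 1/2 else 0) < 1 := by
      rintro ⟨x, y⟩ hxy
      simp only [hG, Set.mem_union, Set.mem_prod, Set.mem_univ, and_true, not_or] at hxy
      obtain ⟨⟨hx1, hxy2⟩, hxh⟩ := hxy
      have hxmem : x ∈ A₀ ∪ Ah := by
        have hx : x ∈ A₀ ∪ Ah ∪ A₁ := hcover ▸ Set.mem_univ x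
        rcases hx with h | h
        · exact h
        · exact absurd h hx1
      have hy1 : y ∉ A₁ := fun h => hxy2 ⟨hxmem, h⟩
      simp only [if_neg hx1, if_neg hy1]
      by_cases hxA : x ∈ Ah
      · have hyh : y ∉ Ah := fun h => hxh ⟨hxA, h⟩
        rw [if_pos hxA, if_neg hyh]; norm_num
      · rw [if_neg hxA]
        split_ifs <;> norm_num
    have hae : ∀ᵐ p ∂μ, W p.1 p.2 ≤ G.indicator (fun _ => (1:ℝ)) p := by
      filter_upwards [hc.2.2] with p hp
      by_cases hpG : p ∈ G
      · rw [Set.indicator_of_mem hpG]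
        exact (hWb p.1 p.2).2
      · rw [Set.indicator_of_notMem hpG]
        by_contra hlt
        push_neg at hlt
        have h1 := hp hlt
        have h2 := hclt p hpG
        linarith
    have hintW : Integrable (fun p : Ω × Ω => W p.1 p.2) μ := by
      refine Integrable.mono (integrable_const (1:ℝ)) hWm.aestronglyMeasurable ?_
      filter_upwards with p
      rw [norm_one, Real.norm_eq_abs, abs_le]
      exact ⟨by linarith [(hWb p.1 p.2).1], (hWb p.1 p.2).2⟩
    have hintI : Integrable (G.indicator fun _ => (1:ℝ)) μ :=
      (integrable_const 1).indicator hGm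
    have h1 : (∫ p, W p.1 p.2 ∂μ) ≤ ∫ p, G.indicator (fun _ => (1:ℝ)) p ∂μ :=
      integral_mono_ae hintW hintI hae
    have h2 : (∫ p, G.indicator (fun _ => (1:ℝ)) p ∂μ) = (μ G).toReal := by
      rw [MeasureTheory.integral_indicator_const (1:ℝ) hGm, smul_eq_mul, mul_one]; rfl
    -- compute μ G
    have hdisjO : Disjoint (A₁ ×ˢ (univ : Set Ω) ∪ (A₀ ∪ Ah) ×ˢ A₁) (Ah ×ˢ Ah) := by
      rw [Set.disjoint_union_left]
      constructor
      · rw [Set.disjoint_left]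
        rintro ⟨x, y⟩ ⟨hx, -⟩ ⟨hx', -⟩
        exact hdh1.symm.le_bot ⟨hx, hx'⟩
      · rw [Set.disjoint_left]
        rintro ⟨x, y⟩ ⟨-, hy⟩ ⟨-, hy'⟩
        exact hdh1.symm.le_bot ⟨hy, hy'⟩
    have hdisjI : Disjoint (A₁ ×ˢ (univ : Set Ω)) ((A₀ ∪ Ah) ×ˢ A₁) := by
      rw [Set.disjoint_left]
      rintro ⟨x, y⟩ ⟨hx, -⟩ ⟨hx', -⟩
      rcases hx' with h | h
      · exact hd01.symm.le_bot ⟨hx, h⟩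
      · exact hdh1.le_bot ⟨h, hx⟩
    have hμG : μ G = ν A₁ * ν univ + (ν A₀ + ν Ah) * ν A₁ + ν Ah * ν Ah := by
      rw [hG, measure_union hdisjO (hh.prod hh),
        measure_union hdisjI ((h₀.union hh).prod h₁),
        Measure.prod_prod, Measure.prod_prod, Measure.prod_prod,
        measure_union hd0h hh]
    have h3 : (μ G).toReal = b * 1 + (d + a) * b + a * a := by
      rw [hμG, ENNReal.toReal_add (by finiteness) (by finiteness),
        ENNReal.toReal_add (by finiteness) (by finiteness),
        ENNReal.toReal_mul, ENNReal.toReal_mul, ENNReal.toReal_mul,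
        ENNReal.toReal_add (by finiteness) (by finiteness)]
      simp [ha, hb, hd]
    calc (∫ p, W p.1 p.2 ∂μ) ≤ (μ G).toReal := h1.trans_eq h2
      _ = a ^ 2 + 2 * b - b ^ 2 := by rw [h3]; nlinarith [hsum]
  · -- algebraic part
    subst hτ
    rcases le_or_gt 2 (4 * a + 5 * b) with h | h
    · refine le_trans ?_ (le_max_left _ _)
      nlinarith [mul_nonneg hb0 (by linarith : (0:ℝ) ≤ 4 * a + 5 * b - 2)]
    · refine le_trans ?_ (le_max_right _ _)
      nlinarith [mul_nonneg ha0 (by nlinarith : (0:ℝ) ≤ 1 - 5/4 * a - b)]
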